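/- The functions K_{b2} = p_x^2 + (2 k_1 x^2 + k_3 x) p_z^2 and K_{b3} = p_y^2 + (k_1 y^2/2 + k_2/y^2) p_z^2 each Poisson-commute with T_b = (1/2)(p_x^2 + p_y^2 + V_b p_z^2), V_b = (1/2)k_1(4x^2+y^2) + k_2/y^2 + k_3 x, and also Poisson-commute with each other, on the set where y ≠ 0. -/

import Mathlib

lemma dq (a b c t : ℝ) : deriv (fun s : ℝ => a*s^2 + b*s + c) t = 2*a*t + b := by
  have h : HasDerivAt (fun s : ℝ => a*s^2 + b*s + c) (a*(2*t)+b) t := by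
    simpa using (((hasDerivAt_pow 2 t).const_mul a).add ((hasDerivAt_id t).const_mul b)).add_const c
  rw [h.deriv]; ring

lemma dqi (a b c d t : ℝ) (ht : t ≠ 0) :
    deriv (fun s : ℝ => a*s^2 + b*s + c + d/s^2) t = 2*a*t + b - 2*d/t^3 := by
  have h2 : HasDerivAt (fun s : ℝ => d/s^2) ((0*t^2 - d*(2*t^(2-1)))/(t^2)^2) t :=
    (hasDerivAt_const t d).div (hasDerivAt_pow 2 t) (pow_ne_zero 2 ht)
  have h : HasDerivAt (fun s : ℝ => a*s^2 + b*s + c + d/s^2)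
      (a*(2*t)+b+0+(0*t^2 - d*(2*t^(2-1)))/(t^2)^2) t := by
    exact ((((hasDerivAt_pow 2 t).const_mul a).add ((hasDerivAt_id t).const_mul b)).add
      (hasDerivAt_const t c)).add h2 |>.congr_deriv (by simp)
  rw [h.deriv]; field_simp; ring


/-- Canonical Poisson bracket on phase space ℝ³ × ℝ³ with coordinates (x,y,z,pₓ,p_y,p_z). -/
noncomputable def pb (F G : ℝ → ℝ → ℝ → ℝ → ℝ → ℝ → ℝ) (x y z px py pz : ℝ) : ℝ :=
    deriv (fun t => F t y z px py pz) x * deriv (fun t => G x y z t py pz) px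
  + deriv (fun t => F x t z px py pz) y * deriv (fun t => G x y z px t pz) py
  + deriv (fun t => F x y t px py pz) z * deriv (fun t => G x y z px py t) pz
  - deriv (fun t => F x y z t py pz) px * deriv (fun t => G t y z px py pz) x
  - deriv (fun t => F x y z px t pz) py * deriv (fun t => G x t z px py pz) y
  - deriv (fun t => F x y z px py t) pz * deriv (fun t => G x y t px py pz) z

noncomputable def Tb (k1 k2 k3 : ℝ) : ℝ → ℝ → ℝ → ℝ → ℝ → ℝ → ℝ :=
  fun x y _ px py pz =>
    (1/2) * (px^2 + py^2 + ((1/2)*k1*(4*x^2+y^2) + k2/y^2 + k3*x) * pz^2)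

noncomputable def Kb2 (k1 k3 : ℝ) : ℝ → ℝ → ℝ → ℝ → ℝ → ℝ → ℝ :=
  fun x _ _ px _ pz => px^2 + (2*k1*x^2 + k3*x) * pz^2

noncomputable def Kb3 (k1 k2 : ℝ) : ℝ → ℝ → ℝ → ℝ → ℝ → ℝ → ℝ :=
  fun _ y _ _ py pz => py^2 + (k1*y^2/2 + k2/y^2) * pz^2

theorem stmt_7 (k1 k2 k3 : ℝ) (x y z px py pz : ℝ) (hy : y ≠ 0) :
    pb (Tb k1 k2 k3) (Kb2 k1 k3) x y z px py pz = 0 ∧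
    pb (Tb k1 k2 k3) (Kb3 k1 k2) x y z px py pz = 0 ∧
    pb (Kb2 k1 k3) (Kb3 k1 k2) x y z px py pz = 0 := by
  have hTx : deriv (fun t => Tb k1 k2 k3 t y z px py pz) x = 2*(k1*pz^2)*x + k3*pz^2/2 := by
    rw [show (fun t => Tb k1 k2 k3 t y z px py pz)
        = fun t : ℝ => (k1*pz^2)*t^2 + (k3*pz^2/2)*t
          + ((1/2)*(px^2 + py^2 + ((1/2)*k1*y^2 + k2/y^2)*pz^2)) from by
      funext t; simp only [Tb]; ring]
    exact dq _ _ _ x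
  have hTy : deriv (fun t => Tb k1 k2 k3 x t z px py pz) y
      = 2*(k1*pz^2/4)*y + 0 - 2*(k2*pz^2/2)/y^3 := by
    rw [show (fun t => Tb k1 k2 k3 x t z px py pz)
        = fun t : ℝ => (k1*pz^2/4)*t^2 + 0*t
          + ((1/2)*(px^2 + py^2 + ((1/2)*k1*(4*x^2) + k3*x)*pz^2)) + (k2*pz^2/2)/t^2 from by
      funext t; simp only [Tb]; field_simp; ring]
    exact dqi _ _ _ _ y hy
  have hTz : deriv (fun t => Tb k1 k2 k3 x y t px py pz) z = 0 := by
    simp only [Tb]; exact deriv_const z _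
  have hTpx : deriv (fun t => Tb k1 k2 k3 x y z t py pz) px = 2*(1/2:ℝ)*px + 0 := by
    rw [show (fun t => Tb k1 k2 k3 x y z t py pz)
        = fun t : ℝ => (1/2:ℝ)*t^2 + 0*t
          + ((1/2)*(py^2 + ((1/2)*k1*(4*x^2+y^2) + k2/y^2 + k3*x)*pz^2)) from by
      funext t; simp only [Tb]; ring]
    exact dq _ _ _ px
  have hTpy : deriv (fun t => Tb k1 k2 k3 x y z px t pz) py = 2*(1/2:ℝ)*py + 0 := by
    rw [show (fun t => Tb k1 k2 k3 x y z px t pz)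
        = fun t : ℝ => (1/2:ℝ)*t^2 + 0*t
          + ((1/2)*(px^2 + ((1/2)*k1*(4*x^2+y^2) + k2/y^2 + k3*x)*pz^2)) from by
      funext t; simp only [Tb]; ring]
    exact dq _ _ _ py
  have hTpz : deriv (fun t => Tb k1 k2 k3 x y z px py t) pz
      = 2*((1/2)*((1/2)*k1*(4*x^2+y^2) + k2/y^2 + k3*x))*pz + 0 := by
    rw [show (fun t => Tb k1 k2 k3 x y z px py t)
        = fun t : ℝ => ((1/2)*((1/2)*k1*(4*x^2+y^2) + k2/y^2 + k3*x))*t^2 + 0*t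
          + ((1/2)*(px^2 + py^2)) from by
      funext t; simp only [Tb]; ring]
    exact dq _ _ _ pz
  have hK2x : deriv (fun t => Kb2 k1 k3 t y z px py pz) x = 2*(2*k1*pz^2)*x + k3*pz^2 := by
    rw [show (fun t => Kb2 k1 k3 t y z px py pz)
        = fun t : ℝ => (2*k1*pz^2)*t^2 + (k3*pz^2)*t + px^2 from by
      funext t; simp only [Kb2]; ring]
    exact dq _ _ _ x
  have hK2y : deriv (fun t => Kb2 k1 k3 x t z px py pz) y = 0 := by
    simp only [Kb2]; exact deriv_const y _
  have hK2z : deriv (fun t => Kb2 k1 k3 x y t px py pz) z = 0 := by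
    simp only [Kb2]; exact deriv_const z _
  have hK2px : deriv (fun t => Kb2 k1 k3 x y z t py pz) px = 2*(1:ℝ)*px + 0 := by
    rw [show (fun t => Kb2 k1 k3 x y z t py pz)
        = fun t : ℝ => (1:ℝ)*t^2 + 0*t + (2*k1*x^2 + k3*x)*pz^2 from by
      funext t; simp only [Kb2]; ring]
    exact dq _ _ _ px
  have hK2py : deriv (fun t => Kb2 k1 k3 x y z px t pz) py = 0 := by
    simp only [Kb2]; exact deriv_const py _
  have hK2pz : deriv (fun t => Kb2 k1 k3 x y z px py t) pz = 2*(2*k1*x^2 + k3*x)*pz + 0 := by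
    rw [show (fun t => Kb2 k1 k3 x y z px py t)
        = fun t : ℝ => (2*k1*x^2 + k3*x)*t^2 + 0*t + px^2 from by
      funext t; simp only [Kb2]; ring]
    exact dq _ _ _ pz
  have hK3x : deriv (fun t => Kb3 k1 k2 t y z px py pz) x = 0 := by
    simp only [Kb3]; exact deriv_const x _
  have hK3y : deriv (fun t => Kb3 k1 k2 x t z px py pz) y
      = 2*(k1*pz^2/2)*y + 0 - 2*(k2*pz^2)/y^3 := by
    rw [show (fun t => Kb3 k1 k2 x t z px py pz)
        = fun t : ℝ => (k1*pz^2/2)*t^2 + 0*t + py^2 + (k2*pz^2)/t^2 from by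
      funext t; simp only [Kb3]; ring]
    exact dqi _ _ _ _ y hy
  have hK3z : deriv (fun t => Kb3 k1 k2 x y t px py pz) z = 0 := by
    simp only [Kb3]; exact deriv_const z _
  have hK3px : deriv (fun t => Kb3 k1 k2 x y z t py pz) px = 0 := by
    simp only [Kb3]; exact deriv_const px _
  have hK3py : deriv (fun t => Kb3 k1 k2 x y z px t pz) py = 2*(1:ℝ)*py + 0 := by
    rw [show (fun t => Kb3 k1 k2 x y z px t pz)
        = fun t : ℝ => (1:ℝ)*t^2 + 0*t + (k1*y^2/2 + k2/y^2)*pz^2 from by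
      funext t; simp only [Kb3]; ring]
    exact dq _ _ _ py
  have hK3pz : deriv (fun t => Kb3 k1 k2 x y z px py t) pz
      = 2*(k1*y^2/2 + k2/y^2)*pz + 0 := by
    rw [show (fun t => Kb3 k1 k2 x y z px py t)
        = fun t : ℝ => (k1*y^2/2 + k2/y^2)*t^2 + 0*t + py^2 from by
      funext t; simp only [Kb3]; ring]
    exact dq _ _ _ pz
  refine ⟨?_, ?_, ?_⟩ <;>
    simp only [pb, hTx, hTy, hTz, hTpx, hTpy, hTpz, hK2x, hK2y, hK2z, hK2px, hK2py, hK2pz,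
      hK3x, hK3y, hK3z, hK3px, hK3py, hK3pz] <;> ring
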